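/- arXiv:2604.09118 — 2 statements merged into one kernel-verified Lean document; each statement's English description precedes it below -/
import Mathlib

section
/- Let G ∈ ℝ^{p×m}, F ∈ ℝ^{p×n}, and w ∈ ℝ^p, and define X := {x ∈ ℝ^n : ∃ z ∈ ℝ^m, G z ≤ w + F x}, where the inequality is componentwise. Then X is a closed subset of ℝ^n. -/
open Finset

variable {p : ℕ} {ι : Type*} [Fintype ι] [DecidableEq ι]

/-- Conic Carathéodory: any nonnegative combination can be rewritten as a nonnegative
combination supported on a linearly independent subfamily. -/
lemma exists_indep_rep (v : ι → (Fin p → ℝ)) :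
    ∀ (N : ℕ) (c : ι → ℝ), (univ.filter fun i => c i ≠ 0).card = N → (∀ i, 0 ≤ c i) →
    ∃ (s : Finset ι) (d : ι → ℝ), LinearIndependent ℝ (fun i : s => v i) ∧
      (∀ i, 0 ≤ d i) ∧ (∀ i ∉ s, d i = 0) ∧ ∑ i, d i • v i = ∑ i, c i • v i := by
  intro N
  induction N using Nat.strong_induction_on with
  | _ N ih =>
    intro c hcard hc
    set s : Finset ι := univ.filter fun i => c i ≠ 0 with hs
    by_cases hind : LinearIndependent ℝ (fun i : s => v i)
    · exact ⟨s, c, hind, hc, fun i hi => by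
        simpa [hs] using hi, rfl⟩
    · -- get a dependence relation supported on s, with some positive coefficient
      obtain ⟨g, hg0, i₀, hgi₀⟩ := Fintype.not_linearIndependent_iff.mp hind
      -- extend to ι
      set g' : ι → ℝ := fun i => if h : i ∈ s then g ⟨i, h⟩ else 0 with hg'
      have hg'supp : ∀ i ∉ s, g' i = 0 := fun i hi => by simp [hg', hi]
      have hg'sum : ∑ i, g' i • v i = 0 := by
        rw [← Finset.sum_subset (Finset.subset_univ s)
          (fun i _ hi => by rw [hg'supp i hi, zero_smul])]
        rw [← Finset.sum_attach s (fun i => g' i • v i)]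
        simpa [hg'] using hg0
      -- WLOG there's a positive coefficient
      obtain ⟨g'', hg''supp, hg''sum, j₀, hj₀⟩ :
          ∃ g'' : ι → ℝ, (∀ i ∉ s, g'' i = 0) ∧ (∑ i, g'' i • v i = 0) ∧
            ∃ j, 0 < g'' j := by
        rcases lt_trichotomy (g' i₀) 0 with h | h | h
        · exact ⟨-g', fun i hi => by simp [hg'supp i hi], by
            simpa using congrArg Neg.neg hg'sum, i₀, by simpa using h⟩
        · exact absurd (by simpa [hg', i₀.2] using h) hgi₀
        · exact ⟨g', hg'supp, hg'sum, i₀, h⟩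
      set T : Finset ι := univ.filter fun i => 0 < g'' i with hT
      have hTne : T.Nonempty := ⟨j₀, by simp [hT, hj₀]⟩
      set t : ℝ := T.inf' hTne fun i => c i / g'' i with ht
      have ht0 : 0 ≤ t := Finset.le_inf' hTne _ fun i hi => by
        have : 0 < g'' i := by simpa [hT] using hi
        exact div_nonneg (hc i) this.le
      set c' : ι → ℝ := fun i => c i - t * g'' i with hc'
      have hc'0 : ∀ i, 0 ≤ c' i := by
        intro i
        by_cases hgi : 0 < g'' i
        · have hle : t ≤ c i / g'' i := Finset.inf'_le _ (by simp [hT, hgi])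
          have := (le_div_iff₀ hgi).mp hle
          simp only [hc']; linarith
        · push_neg at hgi
          have : t * g'' i ≤ 0 := mul_nonpos_of_nonneg_of_nonpos ht0 hgi
          simp only [hc']; linarith [hc i]
      have hc'sum : ∑ i, c' i • v i = ∑ i, c i • v i := by
        simp only [hc', sub_smul, mul_smul, Finset.sum_sub_distrib]
        rw [← Finset.smul_sum, hg''sum, smul_zero, sub_zero]
      -- support strictly decreases
      obtain ⟨k, hkT, hkt⟩ := Finset.exists_mem_eq_inf' hTne fun i => c i / g'' i
      have hgk : 0 < g'' k := by simpa [hT] using hkT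
      have hck : c k ≠ 0 := by
        have hk : k ∈ s := by
          by_contra hk
          exact absurd (hg''supp k hk) hgk.ne'
        simpa [hs] using hk
      have hc'k : c' k = 0 := by
        have htk : t = c k / g'' k := hkt
        rw [hc']
        rw [htk]
        simp only []
        rw [div_mul_cancel₀ _ hgk.ne', sub_self]
      have hsub : (univ.filter fun i => c' i ≠ 0) ⊂ s := by
        constructor
        · intro i hi
          simp only [mem_filter, mem_univ, true_and] at hi
          simp only [hs, mem_filter, mem_univ, true_and]
          intro h0
          apply hi
          have hgs : g'' i = 0 := hg''supp i (by simp [hs, h0])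
          simp [hc', h0, hgs]
        · intro hcon
          have hk : k ∈ s := by simp [hs, hck]
          have := hcon hk
          simp only [mem_filter, mem_univ, true_and] at this
          exact this hc'k
      have hlt : (univ.filter fun i => c' i ≠ 0).card < N :=
        hcard ▸ Finset.card_lt_card hsub
      obtain ⟨s', d, h1, h2, h3, h4⟩ := ih _ hlt c' rfl hc'0
      exact ⟨s', d, h1, h2, h3, h4.trans hc'sum⟩

/-- Extend a nonneg combination over a subtype to all of `ι`. -/
lemma extend_rep (v : ι → (Fin p → ℝ)) (s : Finset ι) (d : {x // x ∈ s} → ℝ)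
    (hd : ∀ i, 0 ≤ d i) :
    ∃ c : ι → ℝ, (∀ i, 0 ≤ c i) ∧ (∑ i, d i • v i) = ∑ i, c i • v i := by
  classical
  refine ⟨fun i => if h : i ∈ s then d ⟨i, h⟩ else 0, fun i => ?_, ?_⟩
  · by_cases h : i ∈ s
    · simpa [h] using hd ⟨i, h⟩
    · simp [h]
  · rw [← Finset.sum_subset (Finset.subset_univ s) (fun i _ hi => by simp [hi]),
      ← Finset.sum_attach s (fun i => (if h : i ∈ s then d ⟨i, h⟩ else 0) • v i)]
    exact Finset.sum_congr rfl fun i _ => by simp [i.2]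

/-- A finitely generated convex cone in `ℝ^p` is closed. -/
lemma cone_closed (v : ι → (Fin p → ℝ)) :
    IsClosed {y : Fin p → ℝ | ∃ c : ι → ℝ, (∀ i, 0 ≤ c i) ∧ y = ∑ i, c i • v i} := by
  classical
  have key : {y : Fin p → ℝ | ∃ c : ι → ℝ, (∀ i, 0 ≤ c i) ∧ y = ∑ i, c i • v i}
      = ⋃ s : {s : Finset ι // LinearIndependent ℝ (fun i : s => v i)},
        (fun d : {x // x ∈ (s : Finset ι)} → ℝ => ∑ i, d i • v i) ''
          {d | ∀ i, 0 ≤ d i} := by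
    ext y
    simp only [Set.mem_setOf_eq, Set.mem_iUnion, Set.mem_image]
    constructor
    · rintro ⟨c, hc, rfl⟩
      obtain ⟨s, d, h1, h2, h3, h4⟩ := exists_indep_rep v _ c rfl hc
      refine ⟨⟨s, h1⟩, fun i => d i, fun i => h2 i, ?_⟩
      rw [← h4, Finset.sum_coe_sort s (fun i => d i • v i)]
      exact Finset.sum_subset (Finset.subset_univ s)
        (fun i _ hi => by rw [h3 i hi, zero_smul])
    · rintro ⟨⟨s, hs⟩, d, hd, rfl⟩
      obtain ⟨c, hc, hsum⟩ := extend_rep v s d hd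
      exact ⟨c, hc, hsum⟩
  rw [key]
  apply isClosed_iUnion_of_finite
  rintro ⟨s, hs⟩
  let L : ({x // x ∈ s} → ℝ) →ₗ[ℝ] (Fin p → ℝ) :=
    { toFun := fun d => ∑ i, d i • v i
      map_add' := fun a b => by simp [add_smul, Finset.sum_add_distrib]
      map_smul' := fun r a => by simp [smul_smul, Finset.smul_sum] }
  have hker : LinearMap.ker L = ⊥ := by
    rw [eq_bot_iff]
    intro d hd
    exact funext (Fintype.linearIndependent_iff.mp hs d hd)
  have hclosed : IsClosed {d : {x // x ∈ s} → ℝ | ∀ i, 0 ≤ d i} := by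
    have : {d : {x // x ∈ s} → ℝ | ∀ i, 0 ≤ d i} = ⋂ i, {d | 0 ≤ d i} := by
      ext; simp [Set.mem_iInter]
    rw [this]
    exact isClosed_iInter fun i => isClosed_le continuous_const (continuous_apply i)
  exact (LinearMap.isClosedEmbedding_of_injective hker).isClosedMap _ hclosed

/-- **The projected feasible set is closed.**
`X := {x | ∃ z, G z ≤ w + F x}` (componentwise inequality) is a closed subset of `ℝ^n`. -/
theorem feasible_set_closed
    {p m n : ℕ}
    (G : Matrix (Fin p) (Fin m) ℝ) (F : Matrix (Fin p) (Fin n) ℝ)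
    (w : Fin p → ℝ) :
    IsClosed {x : Fin n → ℝ | ∃ z : Fin m → ℝ,
      ∀ i : Fin p, G.mulVec z i ≤ (w + F.mulVec x) i} := by
  classical
  -- cone generators: columns of G, their negatives, and standard basis vectors (slacks)
  set v : (Fin m ⊕ Fin m) ⊕ Fin p → (Fin p → ℝ) :=
    fun i => match i with
      | Sum.inl (Sum.inl j) => fun k => G k j
      | Sum.inl (Sum.inr j) => fun k => -G k j
      | Sum.inr i => Pi.single i 1
    with hv
  have hsingle : ∀ (y : Fin p → ℝ), ∑ i, y i • (Pi.single i 1 : Fin p → ℝ) = y := by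
    intro y
    funext k
    rw [Finset.sum_apply]
    simp [Pi.single_apply]
  have hcol : ∀ (z : Fin m → ℝ), ∑ j, z j • (fun k => G k j) = G.mulVec z := by
    intro z
    funext k
    rw [Finset.sum_apply]
    simp [Matrix.mulVec, dotProduct, mul_comm]
  have hset : {x : Fin n → ℝ | ∃ z : Fin m → ℝ,
        ∀ i : Fin p, G.mulVec z i ≤ (w + F.mulVec x) i}
      = (fun x => w + F.mulVec x) ⁻¹'
        {y : Fin p → ℝ | ∃ c : (Fin m ⊕ Fin m) ⊕ Fin p → ℝ,
          (∀ i, 0 ≤ c i) ∧ y = ∑ i, c i • v i} := by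
    ext x
    simp only [Set.mem_setOf_eq, Set.mem_preimage]
    constructor
    · rintro ⟨z, hz⟩
      refine ⟨fun i => match i with
        | Sum.inl (Sum.inl j) => max (z j) 0
        | Sum.inl (Sum.inr j) => max (-z j) 0
        | Sum.inr i => (w + F.mulVec x) i - G.mulVec z i, ?_, ?_⟩
      · rintro ((j | j) | i)
        · exact le_max_right _ _
        · exact le_max_right _ _
        · exact sub_nonneg.mpr (hz _)
      · rw [Fintype.sum_sum_type, Fintype.sum_sum_type]
        simp only [hv]
        rw [hsingle fun i => (w + F.mulVec x) i - G.mulVec z i]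
        have hcomb : (∑ j, max (z j) 0 • (fun k => G k j))
            + ∑ j, max (-z j) 0 • (fun k => -G k j) = G.mulVec z := by
          rw [← Finset.sum_add_distrib, ← hcol z]
          refine Finset.sum_congr rfl fun j _ => ?_
          funext k
          have h := max_zero_sub_max_neg_zero_eq_self (z j)
          simp only [Pi.add_apply, Pi.smul_apply, smul_eq_mul, Pi.neg_apply]
          linear_combination (G k j) * h
        rw [hcomb]
        funext k
        simp
    · rintro ⟨c, hc, hb⟩
      refine ⟨fun j => c (Sum.inl (Sum.inl j)) - c (Sum.inl (Sum.inr j)), fun k => ?_⟩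
      rw [Fintype.sum_sum_type, Fintype.sum_sum_type] at hb
      simp only [hv] at hb
      have hcomb : ((∑ j, c (Sum.inl (Sum.inl j)) • (fun k => G k j))
          + ∑ j, c (Sum.inl (Sum.inr j)) • (fun k => -G k j))
          = G.mulVec (fun j => c (Sum.inl (Sum.inl j)) - c (Sum.inl (Sum.inr j))) := by
        rw [← Finset.sum_add_distrib, ← hcol]
        refine Finset.sum_congr rfl fun j _ => ?_
        funext k
        simp only [Pi.add_apply, Pi.smul_apply, smul_eq_mul, Pi.neg_apply]
        ring
      rw [hcomb] at hb
      have hk := congrFun hb k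
      simp only [Pi.add_apply] at hk
      have h3 : (∑ x, c (Sum.inr x) • (Pi.single x (1:ℝ) : Fin p → ℝ)) k
          = c (Sum.inr k) := by
        rw [Finset.sum_apply]
        simp [Pi.single_apply]
      rw [h3] at hk
      have h0 : (0:ℝ) ≤ c (Sum.inr k) := hc _
      simp only [Pi.add_apply]
      linarith
  rw [hset]
  have h1 : Continuous fun x : Fin n → ℝ => F.mulVec x := by
    have := LinearMap.continuous_of_finiteDimensional (F.mulVecLin)
    exact this
  exact (cone_closed v).preimage (continuous_const.add h1)
end

section
/- Let x₀, d ∈ ℝ^n with d ≠ 0, let a < b be reals, and let β be a random variable uniformly distributed on the interval [a, b]. Then the random vector x₀ + β d is distributed according to the uniform probability measure on the segment S := {x₀ + α d : α ∈ [a, b]}, i.e., its law equals the one-dimensional Hausdorff measure restricted to S normalized by the length ‖d‖·(b − a) of S. -/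
open MeasureTheory
open scoped ENNReal

/-- **The Hit-and-Run update produces a uniform point on the segment.**
If `β` is uniform on `[a, b]` (`a < b`) and `d ≠ 0`, then `x₀ + β d` is
uniformly distributed on the segment `S = {x₀ + α d : α ∈ [a, b]}`: its law is
the one-dimensional Hausdorff measure restricted to `S`, normalized by the
length `‖d‖ (b - a)` of `S`. -/
theorem hit_and_run_update_uniform_on_segment
    {Ω : Type*} [MeasurableSpace Ω] (P : Measure Ω) [IsProbabilityMeasure P]
    {n : ℕ} (x₀ d : EuclideanSpace ℝ (Fin n)) (hd : d ≠ 0)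
    (a b : ℝ) (hab : a < b)
    (β : Ω → ℝ) (hβmeas : Measurable β)
    (hβlaw : P.map β = (ENNReal.ofReal (b - a))⁻¹ • volume.restrict (Set.Icc a b)) :
    P.map (fun ω => x₀ + β ω • d)
      = (ENNReal.ofReal (‖d‖ * (b - a)))⁻¹ •
          (μH[1]).restrict {x : EuclideanSpace ℝ (Fin n) |
            ∃ α ∈ Set.Icc a b, x = x₀ + α • d} := by
  classical
  set f : ℝ → EuclideanSpace ℝ (Fin n) := fun α => x₀ + α • d with hf
  have hfc : Continuous f := continuous_const.add (continuous_id.smul continuous_const)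
  have hfm : Measurable f := hfc.measurable
  have hd0 : (‖d‖₊ : ℝ≥0∞) ≠ 0 := by
    simpa [ENNReal.coe_eq_zero, nnnorm_eq_zero] using hd
  have hdt : (‖d‖₊ : ℝ≥0∞) ≠ ⊤ := ENNReal.coe_ne_top
  -- the segment as an image
  have hSeq : {x : EuclideanSpace ℝ (Fin n) | ∃ α ∈ Set.Icc a b, x = x₀ + α • d}
      = f '' Set.Icc a b := by
    ext x
    simp [hf, eq_comm]
  -- scaling of 1-dimensional Hausdorff measure under f
  have key : ∀ t : Set ℝ, μH[1] (f '' t) = (‖d‖₊ : ℝ≥0∞) * μH[1] t := by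
    intro t
    have h1 : f '' t
        = (fun x : EuclideanSpace ℝ (Fin n) => x₀ + x) '' ((fun r : ℝ => r • d) '' t) := by
      simp [hf, Set.image_image]
    have hiso : Isometry (fun x : EuclideanSpace ℝ (Fin n) => x₀ + x) := by
      apply Isometry.of_dist_eq
      intro x y
      simp [dist_eq_norm]
    rw [h1, hiso.hausdorffMeasure_image (Or.inl zero_le_one),
      hausdorffMeasure_smul_right_image d t]
    simp [ENNReal.smul_def]
  -- pushforward of the restricted Lebesgue measure
  have hmap : (volume.restrict (Set.Icc a b)).map f
      = (‖d‖₊ : ℝ≥0∞)⁻¹ • (μH[1]).restrict (f '' Set.Icc a b) := by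
    ext A hA
    rw [Measure.map_apply hfm hA, Measure.restrict_apply (hfm hA),
      Measure.smul_apply, Measure.restrict_apply hA, smul_eq_mul]
    have hAS : A ∩ f '' Set.Icc a b = f '' (Set.Icc a b ∩ f ⁻¹' A) := by
      rw [Set.image_inter_preimage, Set.inter_comm]
    rw [hAS, key, ← mul_assoc, ENNReal.inv_mul_cancel hd0 hdt, one_mul,
      ← MeasureTheory.hausdorffMeasure_real, Set.inter_comm]
  -- scalar bookkeeping
  have hscal : (ENNReal.ofReal (‖d‖ * (b - a)))⁻¹
      = (ENNReal.ofReal (b - a))⁻¹ * (‖d‖₊ : ℝ≥0∞)⁻¹ := by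
    rw [ENNReal.ofReal_mul (norm_nonneg d), ofReal_norm, enorm_eq_nnnorm,
      ENNReal.mul_inv (Or.inl hd0) (Or.inl hdt), mul_comm]
  calc P.map (fun ω => x₀ + β ω • d)
      = (P.map β).map f := (Measure.map_map hfm hβmeas).symm
    _ = ((ENNReal.ofReal (b - a))⁻¹ • volume.restrict (Set.Icc a b)).map f := by
        rw [hβlaw]
    _ = (ENNReal.ofReal (b - a))⁻¹ • (volume.restrict (Set.Icc a b)).map f := by
        simp [Measure.map_smul]
    _ = (ENNReal.ofReal (b - a))⁻¹ • ((‖d‖₊ : ℝ≥0∞)⁻¹ •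
          (μH[1]).restrict (f '' Set.Icc a b)) := by rw [hmap]
    _ = (ENNReal.ofReal (‖d‖ * (b - a)))⁻¹ •
          (μH[1]).restrict {x : EuclideanSpace ℝ (Fin n) |
            ∃ α ∈ Set.Icc a b, x = x₀ + α • d} := by
        rw [hSeq, smul_smul, hscal]
end
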